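/- Let p be a prime with p ≡ 3 (mod 4). Then the sequence of Morse link numbers L_n modulo p is purely periodic: there exists T > 0 such that L_{n+T} ≡ L_n (mod p) for all n ≥ 0. -/

import Mathlib

/-- `wcat b n x`: `wcat b 0 x = 1` and
`wcat b (n+1) x = b x * ∑_{i+j=n} wcat b i (x+1) * wcat b j x`.
The weighted Catalan number `C_n^b` is `wcat b n 0`. -/
def wcat (b : ℕ → ℤ) : ℕ → ℕ → ℤ
  | 0, _ => 1
  | n + 1, x => b x * ∑ i ∈ (Finset.range (n + 1)).attach,
      wcat b i.1 (x + 1) * wcat b (n - i.1) x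
termination_by n _ => n
decreasing_by
  · exact Finset.mem_range.mp i.2
  · exact Nat.lt_succ_of_le (Nat.sub_le n i.1)

/-- `morseLink n` is the number `L_n` of combinatorial types of Morse links of
order `n`: the weighted Catalan number for the weight `b(x) = (2x+1)²`. -/
def morseLink (n : ℕ) : ℤ := wcat (fun x => (2 * (x : ℤ) + 1) ^ 2) n 0



lemma wcat_zero (b : ℕ → ℤ) (x : ℕ) : wcat b 0 x = 1 := by rw [wcat.eq_def]

lemma wcat_succ (b : ℕ → ℤ) (n x : ℕ) :
    wcat b (n + 1) x = b x * ∑ i ∈ Finset.range (n + 1),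
      wcat b i (x + 1) * wcat b (n - i) x := by
  rw [wcat.eq_def]
  simp only []
  rw [Finset.sum_attach (Finset.range (n+1)) (fun i => wcat b i (x + 1) * wcat b (n - i) x)]

noncomputable section
open Finset Polynomial PowerSeries

def bRed (p x : ℕ) : ZMod p := ((2 * x + 1 : ℕ) : ZMod p) ^ 2

def Lser (p x : ℕ) : PowerSeries (ZMod p) :=
  PowerSeries.mk fun n => ((wcat (fun y => (2 * (y : ℤ) + 1) ^ 2) n x : ℤ) : ZMod p)

lemma Lser_eq (p x : ℕ) :
    Lser p x = 1 + PowerSeries.C (bRed p x) *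
      (PowerSeries.X * (Lser p (x + 1) * Lser p x)) := by
  ext n
  rcases n with _ | n
  · simp [Lser, wcat_zero, bRed]
  · rw [map_add, PowerSeries.coeff_C_mul, PowerSeries.coeff_succ_X_mul,
      PowerSeries.coeff_mul, Finset.Nat.sum_antidiagonal_eq_sum_range_succ_mk]
    simp only [Lser, PowerSeries.coeff_mk, PowerSeries.coeff_one, Nat.succ_ne_zero,
      if_false, zero_add, wcat_succ]
    push_cast [bRed]
    rw [Finset.mul_sum]



def Bp (p m : ℕ) : ℕ → Polynomial (ZMod p)
  | 0 => 1
  | 1 => 1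
  | (j + 2) => Bp p m (j + 1) - Polynomial.C (bRed p (m - 1 - j)) * Polynomial.X * Bp p m j

lemma Lser_top (p m : ℕ) (hm : 2 * m + 1 = p) : Lser p m = 1 := by
  have hb : bRed p m = 0 := by
    rw [bRed, hm, ZMod.natCast_self, zero_pow] <;> norm_num
  rw [Lser_eq p m, hb, map_zero, zero_mul, add_zero]

lemma Bkey (p m : ℕ) (hm : 2 * m + 1 = p) :
    ∀ k, k ≤ m → (Bp p m (k + 1) : PowerSeries (ZMod p)) * Lser p (m - k) = Bp p m k := by
  intro k
  induction k with
  | zero =>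
    intro _
    simp only [Nat.sub_zero, Bp, Polynomial.coe_one, one_mul, Lser_top p m hm]
  | succ k ih =>
    intro hk
    have hk' : k ≤ m := Nat.le_of_succ_le hk
    have hx : m - (k + 1) + 1 = m - k := by omega
    have hx2 : m - 1 - k = m - (k + 1) := by omega
    have h1 := Lser_eq p (m - (k + 1))
    have h2 := ih hk'
    rw [hx] at h1
    show ((Bp p m (k + 2) : Polynomial (ZMod p)) : PowerSeries (ZMod p)) * Lser p (m - (k+1))
      = Bp p m (k + 1)
    rw [show Bp p m (k + 2)
        = Bp p m (k + 1) - Polynomial.C (bRed p (m - 1 - k)) * Polynomial.X * Bp p m k from rfl,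
      hx2, Polynomial.coe_sub, Polynomial.coe_mul, Polynomial.coe_mul, Polynomial.coe_C,
      Polynomial.coe_X]
    linear_combination ((Bp p m (k+1) : PowerSeries (ZMod p))) * h1 +
      PowerSeries.C (bRed p (m - (k+1))) * PowerSeries.X * Lser p (m - (k+1)) * h2

lemma Bp_coeff_zero (p m : ℕ) : ∀ j, (Bp p m j).coeff 0 = 1 := by
  intro j
  induction j using Nat.strong_induction_on with
  | _ j ih =>
    match j with
    | 0 => simp [Bp]
    | 1 => simp [Bp]
    | (j + 2) =>
      rw [show Bp p m (j + 2)
        = Bp p m (j + 1) - Polynomial.C (bRed p (m - 1 - j)) * Polynomial.X * Bp p m j from rfl]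
      rw [Polynomial.coeff_sub, ih (j+1) (by omega), mul_assoc, Polynomial.mul_coeff_zero]
      simp [Polynomial.mul_coeff_zero]

lemma Bp_natDegree_le (p m : ℕ) : ∀ j, (Bp p m j).natDegree ≤ j / 2 := by
  intro j
  induction j using Nat.strong_induction_on with
  | _ j ih =>
    match j with
    | 0 => simp [Bp]
    | 1 => simp [Bp]
    | (j + 2) =>
      rw [show Bp p m (j + 2)
        = Bp p m (j + 1) - Polynomial.C (bRed p (m - 1 - j)) * Polynomial.X * Bp p m j from rfl]
      refine le_trans (Polynomial.natDegree_sub_le _ _) ?_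
      have h1 := ih (j+1) (by omega)
      have h2 := ih j (by omega)
      have h3 : (Polynomial.C (bRed p (m - 1 - j)) * Polynomial.X * Bp p m j).natDegree
          ≤ 1 + j / 2 := by
        refine le_trans (Polynomial.natDegree_mul_le) ?_
        have : (Polynomial.C (bRed p (m - 1 - j)) * Polynomial.X).natDegree ≤ 1 := by
          refine le_trans (Polynomial.natDegree_mul_le) ?_
          simp [Polynomial.natDegree_X_le]
        omega
      have := max_le_iff.mpr ⟨le_trans h1 (by omega : (j+1)/2 ≤ (j+2)/2),
        le_trans h3 (by omega : 1 + j/2 ≤ (j+2)/2)⟩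
      exact le_trans (max_le_max le_rfl le_rfl) this

lemma Bp_coeff_lead (p m : ℕ) [Fact p.Prime] (hm : 2 * m + 1 = p) :
    ∀ k, 2 * k ≤ m + 1 → (Bp p m (2 * k)).coeff k ≠ 0 := by
  intro k
  induction k with
  | zero => intro _; simp [Bp]
  | succ k ih =>
    intro hk
    have h2 : (2 : ℕ) * (k + 1) = 2 * k + 2 := by ring
    rw [h2, show Bp p m (2 * k + 2)
      = Bp p m (2 * k + 1) - Polynomial.C (bRed p (m - 1 - 2 * k)) * Polynomial.X * Bp p m (2 * k)
      from rfl, Polynomial.coeff_sub,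
      Polynomial.coeff_eq_zero_of_natDegree_lt
        (lt_of_le_of_lt (Bp_natDegree_le p m (2 * k + 1)) (by omega)),
      zero_sub, neg_ne_zero, mul_assoc, Polynomial.coeff_C_mul, Polynomial.coeff_X_mul]
    have hb : bRed p (m - 1 - 2 * k) ≠ 0 := by
      have hlt : 2 * (m - 1 - 2 * k) + 1 < p := by omega
      have hpos : 0 < 2 * (m - 1 - 2 * k) + 1 := by omega
      haveI : NeZero p := ⟨(Fact.out : p.Prime).ne_zero⟩
      have hbase : ((2 * (m - 1 - 2 * k) + 1 : ℕ) : ZMod p) ≠ 0 := by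
        rw [Ne, ZMod.natCast_eq_zero_iff]
        intro hdvd
        have := Nat.le_of_dvd (by omega) hdvd
        omega
      exact pow_ne_zero _ hbase
    exact mul_ne_zero hb (ih (by omega))


/-- For any prime `p ≡ 3 (mod 4)`, the sequence `L_n (mod p)` is purely periodic. -/
theorem morseLink_purely_periodic_mod_p
    (p : ℕ) (hp : p.Prime) (h3 : p % 4 = 3) :
    ∃ T : ℕ, 0 < T ∧ ∀ n : ℕ,
      morseLink (n + T) ≡ morseLink n [ZMOD (p : ℤ)] := by
  haveI : Fact p.Prime := ⟨hp⟩
  haveI : NeZero p := ⟨hp.ne_zero⟩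
  obtain ⟨m, hm⟩ : ∃ m, 2 * m + 1 = p := ⟨(p - 1)/2, by omega⟩
  have hmodd : m % 2 = 1 := by omega
  obtain ⟨d, hd⟩ : ∃ d, 2 * d = m + 1 := ⟨(m+1)/2, by omega⟩
  have hdpos : 0 < d := by omega
  set Q := Bp p m (m + 1) with hQdef
  set Lm : ℕ → ZMod p := fun n => ((morseLink n : ℤ) : ZMod p) with hLmdef
  have hcoeffL : ∀ n, PowerSeries.coeff n (Lser p 0) = Lm n := fun n => by
    simp [Lser, morseLink, hLmdef]
  have hkey : (Q : PowerSeries (ZMod p)) * Lser p 0 = Bp p m m := by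
    have := Bkey p m hm m le_rfl
    rwa [Nat.sub_self] at this
  -- the linear recurrence
  have hrec : ∀ n : ℕ, ∑ i ∈ Finset.range (d + 1), Q.coeff i * Lm (n + d - i) = 0 := by
    intro n
    have h1 : PowerSeries.coeff (n + d) ((Q : PowerSeries (ZMod p)) * Lser p 0)
        = (Bp p m m).coeff (n + d) := by rw [hkey, Polynomial.coeff_coe]
    rw [PowerSeries.coeff_mul, Finset.Nat.sum_antidiagonal_eq_sum_range_succ_mk] at h1
    have hPd : (Bp p m m).coeff (n + d) = 0 := Polynomial.coeff_eq_zero_of_natDegree_lt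
      (lt_of_le_of_lt (Bp_natDegree_le p m m) (by omega))
    rw [hPd] at h1
    calc ∑ i ∈ Finset.range (d + 1), Q.coeff i * Lm (n + d - i)
        = ∑ i ∈ Finset.range (n + d + 1), Q.coeff i * Lm (n + d - i) := by
          refine Finset.sum_subset (Finset.range_subset_range.mpr (by omega)) ?_
          intro x _ hx
          simp only [Finset.mem_range, not_lt] at hx
          rw [Polynomial.coeff_eq_zero_of_natDegree_lt
            (lt_of_le_of_lt (Bp_natDegree_le p m (m+1)) (by omega)), zero_mul]
      _ = 0 := by
          rw [← h1]
          exact Finset.sum_congr rfl fun i _ => by rw [Polynomial.coeff_coe, hcoeffL]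
  have hq0 : Q.coeff 0 = 1 := Bp_coeff_zero p m (m + 1)
  have hqd : Q.coeff d ≠ 0 := by
    have := Bp_coeff_lead p m hm d (by omega)
    rwa [hd] at this
  -- forward and backward determination
  have hfwd : ∀ n, Lm (n + d)
      = -∑ i ∈ Finset.range d, Q.coeff (i + 1) * Lm (n + d - (i + 1)) := by
    intro n
    have h := hrec n
    rw [Finset.sum_range_succ'] at h
    rw [hq0, one_mul, Nat.sub_zero] at h
    exact eq_neg_of_add_eq_zero_right h
  have hbwd : ∀ n, Lm n
      = -(Q.coeff d)⁻¹ * ∑ i ∈ Finset.range d, Q.coeff i * Lm (n + d - i) := by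
    intro n
    have h := hrec n
    rw [Finset.sum_range_succ] at h
    have h2 : Q.coeff d * Lm (n + d - d) = -∑ i ∈ Finset.range d, Q.coeff i * Lm (n + d - i) :=
      eq_neg_of_add_eq_zero_right h
    rw [Nat.add_sub_cancel] at h2
    field_simp
    linear_combination h2
  -- forward step
  have fwdlemma : ∀ a c : ℕ, (∀ j, j < d → Lm (a + j) = Lm (c + j)) →
      ∀ j, j < d → Lm (a + 1 + j) = Lm (c + 1 + j) := by
    intro a c h j hj
    rcases Nat.lt_or_ge (j + 1) d with hlt | hge
    · have := h (j + 1) hlt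
      convert this using 2 <;> omega
    · have e1 : a + 1 + j = a + d := by omega
      have e2 : c + 1 + j = c + d := by omega
      rw [e1, e2, hfwd a, hfwd c]
      congr 1
      refine Finset.sum_congr rfl fun i hi => ?_
      simp only [Finset.mem_range] at hi
      congr 1
      have := h (d - (i + 1)) (by omega)
      convert this using 2 <;> omega
  -- backward step
  have bwdlemma : ∀ a c : ℕ, (∀ j, j < d → Lm (a + 1 + j) = Lm (c + 1 + j)) →
      ∀ j, j < d → Lm (a + j) = Lm (c + j) := by
    intro a c h j hj
    rcases Nat.eq_zero_or_pos j with hj0 | hjpos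
    · subst hj0
      rw [Nat.add_zero, Nat.add_zero, hbwd a, hbwd c]
      congr 1
      refine Finset.sum_congr rfl fun i hi => ?_
      simp only [Finset.mem_range] at hi
      congr 1
      have := h (d - 1 - i) (by omega)
      convert this using 2 <;> omega
    · have := h (j - 1) (by omega)
      convert this using 2 <;> omega
  -- pigeonhole
  set S : ℕ → (Fin d → ZMod p) := fun n i => Lm (n + i) with hSdef
  obtain ⟨a, b, hab, hSab⟩ := Finite.exists_ne_map_eq_of_infinite S
  -- order them
  obtain ⟨a', T, hT, hE⟩ : ∃ a' T, 0 < T ∧ ∀ j, j < d → Lm (a' + j) = Lm (a' + T + j) := by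
    rcases lt_or_gt_of_ne hab with hlt | hlt
    · exact ⟨a, b - a, by omega, fun j hj => by
        have := congrFun hSab ⟨j, hj⟩
        simpa [hSdef, show a + (b - a) = b from by omega] using this⟩
    · exact ⟨b, a - b, by omega, fun j hj => by
        have := congrFun hSab ⟨j, hj⟩
        simpa [hSdef, show b + (a - b) = a from by omega] using this.symm⟩
  have up : ∀ k, ∀ j, j < d → Lm (a' + k + j) = Lm (a' + k + T + j) := by
    intro k
    induction k with
    | zero => intro j hj; have := hE j hj; convert this using 2 <;> omega
    | succ k ih =>
      intro j hj
      have := fwdlemma (a' + k) (a' + k + T) ih j hj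
      convert this using 2 <;> omega
  have down : ∀ k, ∀ j, j < d → Lm (a' - k + j) = Lm (a' - k + T + j) := by
    intro k
    induction k with
    | zero => intro j hj; have := up 0 j hj; convert this using 2 <;> omega
    | succ k ih =>
      by_cases hk : k < a'
      · refine bwdlemma (a' - (k + 1)) (a' - (k + 1) + T) ?_
        intro j hj
        have := ih j hj
        convert this using 2 <;> omega
      · intro j hj
        have := ih j hj
        convert this using 2 <;> omega
  refine ⟨T, hT, fun n => ?_⟩
  have hfin : Lm (n + T) = Lm n := by
    rcases Nat.lt_or_ge n a' with hlt | hge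
    · have := down (a' - n) 0 hdpos
      have e : a' - (a' - n) = n := by omega
      rw [e] at this
      simpa using this.symm
    · have := up (n - a') 0 hdpos
      have e : a' + (n - a') = n := by omega
      rw [e] at this
      simpa using this.symm
  exact (ZMod.intCast_eq_intCast_iff _ _ _).mp hfin
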